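/- arXiv:2406.11996 — 2 statements merged into one kernel-verified Lean document; each statement's English description precedes it below -/
import Mathlib

section
/- If Λ and Ω are connected graphs, then the restricted wreath product graph Ω ≀ Λ is connected. -/
open SimpleGraph

/-- Restricted wreath product of graphs: `Ω` (states, base `ω`) by `Λ` (lamps). -/
def GraphWreath {W V : Type*} (Ω : SimpleGraph W) (ω : W) (Λ : SimpleGraph V) :
    SimpleGraph ({f : V → W // {u | f u ≠ ω}.Finite} × V) where
  Adj x y :=
    (x.2 = y.2 ∧ (∀ u, u ≠ x.2 → x.1.1 u = y.1.1 u) ∧ Ω.Adj (x.1.1 x.2) (y.1.1 x.2))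
    ∨ (x.1 = y.1 ∧ Λ.Adj x.2 y.2)
  symm := by
    constructor
    rintro ⟨f, v⟩ ⟨g, w⟩ (⟨h1, h2, h3⟩ | ⟨h1, h2⟩)
    · cases h1
      exact Or.inl ⟨rfl, fun u hu => (h2 u hu).symm, h3.symm⟩
    · exact Or.inr ⟨h1.symm, h2.symm⟩
  loopless := by
    constructor
    rintro ⟨f, v⟩ (⟨_, _, h⟩ | ⟨_, h⟩)
    · exact Ω.irrefl h
    · exact Λ.irrefl h

section Aux

variable {W V : Type*} (Ω : SimpleGraph W) (ω : W) (Λ : SimpleGraph V)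

/-- Moving the lamplighter along a reachable pair in `Λ`. -/
lemma graphWreath_move (f : {f : V → W // {u | f u ≠ ω}.Finite}) {v w : V}
    (h : Λ.Reachable v w) : (GraphWreath Ω ω Λ).Reachable (f, v) (f, w) := by
  obtain ⟨p⟩ := h
  induction p with
  | nil => exact Reachable.refl _
  | @cons x y z h p ih =>
      have step : (GraphWreath Ω ω Λ).Adj (f, x) (f, y) := Or.inr ⟨rfl, h⟩
      exact step.reachable.trans ih

/-- Changing the lamp at the current position along a walk in `Ω`. -/
lemma graphWreath_lamp {a b : W} (p : Ω.Walk a b) :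
    ∀ (f g : {f : V → W // {u | f u ≠ ω}.Finite}) (v : V),
    f.1 v = a → g.1 v = b → (∀ u, u ≠ v → f.1 u = g.1 u) →
    (GraphWreath Ω ω Λ).Reachable (f, v) (g, v) := by
  classical
  induction p with
  | nil =>
      intro f g v hf hg hagree
      have : f = g := by
        apply Subtype.ext
        funext u
        by_cases hu : u = v
        · subst hu; rw [hf, hg]
        · exact hagree u hu
      rw [this]
  | @cons a c b h p ih =>
      intro f g v hf hg hagree
      set f' : {f : V → W // {u | f u ≠ ω}.Finite} :=
        ⟨Function.update f.1 v c, by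
          apply Set.Finite.subset (Set.Finite.insert v f.2)
          intro u hu
          by_cases huv : u = v
          · exact Or.inl huv
          · right
            simpa [Function.update_of_ne huv] using hu⟩ with hf'
      have step : (GraphWreath Ω ω Λ).Adj (f, v) (f', v) := by
        left
        refine ⟨rfl, fun u hu => ?_, ?_⟩
        · simp [hf', Function.update_of_ne hu]
        · simp [hf', hf, h]
      exact Reachable.trans ⟨Walk.cons step Walk.nil⟩
        (ih f' g v (by simp [hf']) hg
          (fun u hu => by simpa [hf', Function.update_of_ne hu] using hagree u hu))

lemma graphWreath_to_base (hΩ : Ω.Connected) (hΛ : Λ.Connected)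
    (s : Finset V) :
    ∀ (f : {f : V → W // {u | f u ≠ ω}.Finite}), {u | f.1 u ≠ ω} ⊆ ↑s →
    ∀ v : V, (GraphWreath Ω ω Λ).Reachable (f, v)
      (⟨fun _ => ω, by simp⟩, v) := by
  classical
  induction s using Finset.induction with
  | empty =>
      intro f hf v
      have : f = ⟨fun _ => ω, by simp⟩ := by
        apply Subtype.ext
        funext u
        by_contra h
        simpa using hf h
      rw [this]
  | @insert a s ha ih =>
      intro f hf v
      by_cases hfa : f.1 a = ω
      · refine ih f (fun u hu => ?_) v
        rcases Finset.mem_insert.mp (by simpa using hf hu) with h | h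
        · exact absurd (h ▸ hfa) hu
        · exact h
      · set g : {f : V → W // {u | f u ≠ ω}.Finite} :=
          ⟨Function.update f.1 a ω, by
            apply Set.Finite.subset f.2
            intro u hu
            by_cases hua : u = a
            · subst hua; simp at hu
            · simpa [Function.update_of_ne hua] using hu⟩ with hg
        have h1 := graphWreath_move Ω ω Λ f (hΛ.preconnected v a)
        obtain ⟨p⟩ := hΩ.preconnected (f.1 a) ω
        have h2 := graphWreath_lamp Ω ω Λ p f g a rfl (by simp [hg])
          (fun u hu => by simp [hg, Function.update_of_ne hu])
        have h3 : (GraphWreath Ω ω Λ).Reachable (g, a)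
            (⟨fun _ => ω, by simp⟩, a) := by
          refine ih g (fun u hu => ?_) a
          by_cases hua : u = a
          · subst hua; simp [hg] at hu
          · have := hu
            simp only [hg, Set.mem_setOf_eq, Function.update_of_ne hua] at this
            rcases Finset.mem_insert.mp (by simpa using hf this) with h | h
            · exact absurd h hua
            · exact h
        have h4 := graphWreath_move Ω ω Λ
          (⟨fun _ => ω, by simp⟩ : {f : V → W // {u | f u ≠ ω}.Finite})
          (hΛ.preconnected a v)
        exact ((h1.trans h2).trans h3).trans h4

end Aux

/-- the restricted wreath product of connected graphs is connected. -/
theorem stmt_2 {W V : Type*} (Ω : SimpleGraph W) (ω : W) (Λ : SimpleGraph V)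
    (hΩ : Ω.Connected) (hΛ : Λ.Connected) :
    (GraphWreath Ω ω Λ).Connected := by
  have hne : Nonempty V := hΛ.nonempty
  rw [SimpleGraph.connected_iff]
  constructor
  · rintro ⟨f, v⟩ ⟨g, w⟩
    have h1 := graphWreath_to_base Ω ω Λ hΩ hΛ f.2.toFinset f
      (fun u hu => f.2.mem_toFinset.mpr hu) v
    have h2 := graphWreath_to_base Ω ω Λ hΩ hΛ g.2.toFinset g
      (fun u hu => g.2.mem_toFinset.mpr hu) w
    have h3 := graphWreath_move Ω ω Λ
      (⟨fun _ => ω, by simp⟩ : {f : V → W // {u | f u ≠ ω}.Finite})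
      (hΛ.preconnected v w)
    exact (h1.trans h3).trans h2.symm
  · exact ⟨⟨⟨fun _ => ω, by simp⟩, Classical.arbitrary V⟩⟩
end

section
/- Let Λ be a graph containing a geodesic path P with 2r+1 vertices. Let Ω be a graph with adjacent vertices ω, ω₁. Then any two vertices (φ₁, p₁) and (φ₂, p₂) of Ω ≀ Λ such that p₁, p₂ ∈ V(P) and both φ₁, φ₂ take values in {ω, ω₁} with support in V(P) are at distance at most 2(6r+1) in Ω ≀ Λ. -/
open SimpleGraph

open scoped Classical

section Aux

variable {W V : Type*} {Ω : SimpleGraph W} {ω : W} {Λ : SimpleGraph V}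

private lemma upd_fin {f : V → W} (hf : {u | f u ≠ ω}.Finite) (p : V) (w' : W) :
    {u | Function.update f p w' u ≠ ω}.Finite :=
  (hf.insert p).subset fun u hu => by
    rcases eq_or_ne u p with rfl | h
    · exact Set.mem_insert _ _
    · exact Set.mem_insert_of_mem _ (by simpa [Function.update_of_ne h] using hu)

private lemma adj_flip {f : V → W} (hf : {u | f u ≠ ω}.Finite) (p : V) {w' : W}
    (h : Ω.Adj (f p) w') :
    (GraphWreath Ω ω Λ).Adj (⟨f, hf⟩, p) (⟨Function.update f p w', upd_fin hf p w'⟩, p) :=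
  Or.inl ⟨rfl, fun u hu => (Function.update_of_ne hu _ _).symm, by simpa using h⟩

private lemma adj_move (f : {f : V → W // {u | f u ≠ ω}.Finite}) {p q : V} (h : Λ.Adj p q) :
    (GraphWreath Ω ω Λ).Adj (f, p) (f, q) := Or.inr ⟨rfl, h⟩

private lemma lift_walk {N : ℕ} {P : Fin N → V}
    (hwalk : ∀ i : Fin N, ∀ h : (i : ℕ) + 1 < N, Λ.Adj (P i) (P ⟨(i : ℕ) + 1, h⟩))
    (f : {f : V → W // {u | f u ≠ ω}.Finite}) :
    ∀ (n a : ℕ) (h : a + n < N),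
      ∃ p : (GraphWreath Ω ω Λ).Walk (f, P ⟨a, by omega⟩) (f, P ⟨a + n, h⟩),
        p.length = n := by
  intro n
  induction n with
  | zero => exact fun a h => ⟨Walk.nil, rfl⟩
  | succ n ih =>
      intro a h
      obtain ⟨p, hp⟩ := ih a (by omega)
      exact ⟨p.concat (adj_move f (hwalk ⟨a + n, by omega⟩ (by omega))),
        by simp [Walk.length_concat, hp]⟩

private lemma sweep {ω₁ : W} (hadj : Ω.Adj ω ω₁) {N : ℕ} {P : Fin N → V}
    (hwalk : ∀ i : Fin N, ∀ h : (i : ℕ) + 1 < N, Λ.Adj (P i) (P ⟨(i : ℕ) + 1, h⟩))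
    (Pinj : Function.Injective P) (h0 : 0 < N) :
    ∀ (k : ℕ) (hk : k < N) (f : V → W) (hf : {u | f u ≠ ω}.Finite),
      (∀ u, f u = ω ∨ f u = ω₁) →
      (∀ u, f u ≠ ω → ∃ i : ℕ, ∃ h : i < N, i ≤ k ∧ u = P ⟨i, h⟩) →
      ∃ p : (GraphWreath Ω ω Λ).Walk (⟨f, hf⟩, P ⟨k, hk⟩)
          (⟨fun _ => ω, Set.finite_empty.subset fun u hu => (hu rfl).elim⟩, P ⟨0, h0⟩),
        p.length ≤ 2 * k + 1 := by
  intro k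
  induction k with
  | zero =>
      intro hk f hf hval hsupp
      by_cases h00 : f (P ⟨0, hk⟩) = ω
      · have hfc : f = fun _ => ω := by
          funext u
          by_contra hu
          obtain ⟨i, hi, hile, rfl⟩ := hsupp u hu
          have : i = 0 := by omega
          subst this
          exact hu h00
        subst hfc
        exact ⟨Walk.nil.copy rfl rfl, by simp⟩
      · have hΩ : Ω.Adj (f (P ⟨0, hk⟩)) ω := by
          rcases hval (P ⟨0, hk⟩) with h | h
          · exact absurd h h00
          · rw [h]; exact hadj.symm
        have hupd : Function.update f (P ⟨0, hk⟩) ω = fun _ => ω := by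
          funext u
          rcases eq_or_ne u (P ⟨0, hk⟩) with rfl | h
          · simp
          · rw [Function.update_of_ne h]
            by_contra hu
            obtain ⟨i, hi, hile, rfl⟩ := hsupp u hu
            have : i = 0 := by omega
            subst this
            exact h rfl
        exact ⟨Walk.cons (adj_flip hf _ hΩ)
          (Walk.nil.copy rfl (Prod.ext (Subtype.ext hupd) rfl)), by simp⟩
  | succ k ih =>
      intro hk f hf hval hsupp
      have hk' : k < N := by omega
      -- tail construction: from a config g off at P (k+1), go to base
      have tail : ∀ (g : V → W) (hg : {u | g u ≠ ω}.Finite),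
          (∀ u, g u = ω ∨ g u = ω₁) →
          (∀ u, g u ≠ ω → ∃ i : ℕ, ∃ h : i < N, i ≤ k + 1 ∧ u = P ⟨i, h⟩) →
          g (P ⟨k + 1, hk⟩) = ω →
          ∃ p : (GraphWreath Ω ω Λ).Walk (⟨g, hg⟩, P ⟨k + 1, hk⟩)
              (⟨fun _ => ω, Set.finite_empty.subset fun u hu => (hu rfl).elim⟩, P ⟨0, h0⟩),
            p.length ≤ 2 * k + 2 := by
        intro g hg hgval hgsupp hgoff
        have hgsupp' : ∀ u, g u ≠ ω → ∃ i : ℕ, ∃ h : i < N, i ≤ k ∧ u = P ⟨i, h⟩ := by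
          intro u hu
          obtain ⟨i, hi, hile, rfl⟩ := hgsupp u hu
          refine ⟨i, hi, ?_, rfl⟩
          by_contra hik
          have : i = k + 1 := by omega
          subst this
          exact hu hgoff
        obtain ⟨p, hp⟩ := ih hk' g hg hgval hgsupp'
        refine ⟨Walk.cons (adj_move ⟨g, hg⟩ (hwalk ⟨k, hk'⟩ (by simpa using hk)).symm) p, ?_⟩
        simpa using by omega
      by_cases hoff : f (P ⟨k + 1, hk⟩) = ω
      · obtain ⟨p, hp⟩ := tail f hf hval hsupp hoff
        exact ⟨p, by omega⟩
      · have hΩ : Ω.Adj (f (P ⟨k + 1, hk⟩)) ω := by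
          rcases hval (P ⟨k + 1, hk⟩) with h | h
          · exact absurd h hoff
          · rw [h]; exact hadj.symm
        set g := Function.update f (P ⟨k + 1, hk⟩) ω with hgdef
        have hgval : ∀ u, g u = ω ∨ g u = ω₁ := by
          intro u
          rcases eq_or_ne u (P ⟨k + 1, hk⟩) with rfl | h
          · left; simp [hgdef]
          · rw [hgdef, Function.update_of_ne h]; exact hval u
        have hgsupp : ∀ u, g u ≠ ω → ∃ i : ℕ, ∃ h : i < N, i ≤ k + 1 ∧ u = P ⟨i, h⟩ := by
          intro u hu
          rcases eq_or_ne u (P ⟨k + 1, hk⟩) with rfl | h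
          · exact absurd (by simp [hgdef]) hu
          · rw [hgdef, Function.update_of_ne h] at hu
            exact hsupp u hu
        have hgoff : g (P ⟨k + 1, hk⟩) = ω := by simp [hgdef]
        obtain ⟨p, hp⟩ := tail g (upd_fin hf _ _) hgval hgsupp hgoff
        exact ⟨Walk.cons (adj_flip hf _ hΩ) p, by simpa using by omega⟩

private lemma to_base {ω₁ : W} (hadj : Ω.Adj ω ω₁) {r : ℕ} {P : Fin (2 * r + 1) → V}
    (hwalk : ∀ i : Fin (2 * r + 1), ∀ h : (i : ℕ) + 1 < 2 * r + 1,
      Λ.Adj (P i) (P ⟨(i : ℕ) + 1, h⟩))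
    (Pinj : Function.Injective P)
    (x : {f : V → W // {u | f u ≠ ω}.Finite} × V)
    (hvalx : ∀ u, x.1.1 u = ω ∨ x.1.1 u = ω₁)
    (hsuppx : ∀ u, x.1.1 u ≠ ω → u ∈ Set.range P)
    (hposx : x.2 ∈ Set.range P) :
    ∃ p : (GraphWreath Ω ω Λ).Walk x
        (⟨fun _ => ω, Set.finite_empty.subset fun u hu => (hu rfl).elim⟩,
          P ⟨0, by omega⟩),
      p.length ≤ 6 * r + 1 := by
  obtain ⟨⟨f, hf⟩, v⟩ := x
  obtain ⟨m, rfl⟩ := hposx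
  -- walk from P m to P (2r)
  obtain ⟨p₁, hp₁⟩ := lift_walk (Ω := Ω) hwalk ⟨f, hf⟩ (2 * r - (m : ℕ)) (m : ℕ)
    (by have := m.isLt; omega)
  have hfin : (⟨(m : ℕ) + (2 * r - (m : ℕ)), by have := m.isLt; omega⟩ : Fin (2 * r + 1))
      = ⟨2 * r, by omega⟩ := by
    rw [Fin.mk.injEq]
    have := m.isLt
    omega
  have he := congrArg
    (fun i : Fin (2 * r + 1) =>
      ((⟨f, hf⟩ : {f : V → W // {u | f u ≠ ω}.Finite}), P i)) hfin
  obtain ⟨p₂, hp₂⟩ := sweep hadj hwalk Pinj (by omega) (2 * r) (by omega) f hf hvalx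
    (by
      intro u hu
      obtain ⟨j, rfl⟩ := hsuppx u hu
      exact ⟨(j : ℕ), j.isLt, by have := j.isLt; omega, rfl⟩)
  refine ⟨(p₁.copy rfl he).append p₂, ?_⟩
  rw [Walk.length_append, Walk.length_copy, hp₁]
  have := m.isLt
  omega

end Aux

/-- if `P` is a geodesic path in `Λ` with `2r+1` vertices and `ω, ω₁` are
adjacent vertices of `Ω`, then any two vertices `(φ₁, p₁)`, `(φ₂, p₂)` of `Ω ≀ Λ` with
`p₁, p₂` on `P` and `φ₁, φ₂` taking values in `{ω, ω₁}` with support on `P` are at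
distance at most `2(6r + 1)` in `Ω ≀ Λ`. -/
theorem stmt_16 {W V : Type*} (Ω : SimpleGraph W) (ω ω₁ : W) (Λ : SimpleGraph V)
    (hadj : Ω.Adj ω ω₁)
    (r : ℕ) (P : Fin (2 * r + 1) → V)
    (hwalk : ∀ i : Fin (2 * r + 1), ∀ h : (i : ℕ) + 1 < 2 * r + 1,
      Λ.Adj (P i) (P ⟨(i : ℕ) + 1, h⟩))
    (hgeo : ∀ i j : Fin (2 * r + 1), (i : ℕ) ≤ (j : ℕ) →
      Λ.dist (P i) (P j) = (j : ℕ) - (i : ℕ))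
    (x y : {f : V → W // {u | f u ≠ ω}.Finite} × V)
    (hvalx : ∀ u, x.1.1 u = ω ∨ x.1.1 u = ω₁)
    (hsuppx : ∀ u, x.1.1 u ≠ ω → u ∈ Set.range P)
    (hposx : x.2 ∈ Set.range P)
    (hvaly : ∀ u, y.1.1 u = ω ∨ y.1.1 u = ω₁)
    (hsuppy : ∀ u, y.1.1 u ≠ ω → u ∈ Set.range P)
    (hposy : y.2 ∈ Set.range P) :
    (GraphWreath Ω ω Λ).dist x y ≤ 2 * (6 * r + 1) := by
  have Pinj : Function.Injective P := by
    intro i j hij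
    rcases le_total (i : ℕ) (j : ℕ) with h | h
    · have := hgeo i j h
      rw [hij, SimpleGraph.dist_self] at this
      exact Fin.ext (by omega)
    · have := hgeo j i h
      rw [hij, SimpleGraph.dist_self] at this
      exact Fin.ext (by omega)
  obtain ⟨px, hpx⟩ := to_base hadj hwalk Pinj x hvalx hsuppx hposx
  obtain ⟨py, hpy⟩ := to_base hadj hwalk Pinj y hvaly hsuppy hposy
  calc (GraphWreath Ω ω Λ).dist x y ≤ (px.append py.reverse).length :=
        SimpleGraph.dist_le _
    _ = px.length + py.length := by
        rw [Walk.length_append, Walk.length_reverse]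
    _ ≤ 2 * (6 * r + 1) := by omega
end
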